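/- Let D be an integral domain. (1) If D contains a nonzero nonunit comparable element, then for every nonzero nonunit comparable element x of D the ideal Q := ⋂_{n ≥ 0} x^n D is a prime ideal such that D/Q is a valuation domain and Q = QD_Q. (2) Conversely, if there is a nonzero element x of D such that Q := ⋂_{n ≥ 0} x^n D is a prime ideal, D/Q is a valuation domain, and Q = QD_Q, then D is a t-local domain and x is a comparable element of D. -/

import Mathlib

open scoped nonZeroDivisors

/-- The `t`-closure of a fractional ideal `E` of an integral domain `D`:
the union (here: supremum, which is a directed union) of `F^v = (F⁻¹)⁻¹` over all
nonzero finitely generated fractional subideals `F` of `E`, viewed as a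
`D`-submodule of the fraction field of `D`. -/
noncomputable def tClos (D : Type*) [CommRing D] [IsDomain D]
    (E : FractionalIdeal D⁰ (FractionRing D)) : Submodule D (FractionRing D) :=
  ⨆ F ∈ {F : FractionalIdeal D⁰ (FractionRing D) |
      F ≠ 0 ∧ F ≤ E ∧ (F : Submodule D (FractionRing D)).FG},
    (((F⁻¹)⁻¹ : FractionalIdeal D⁰ (FractionRing D)) : Submodule D (FractionRing D))

/-- An integral ideal `I` of an integral domain `D` is a `t`-ideal if `I = I^t`. -/
def Ideal.IsT {D : Type*} [CommRing D] [IsDomain D] (I : Ideal D) : Prop :=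
  ((I : FractionalIdeal D⁰ (FractionRing D)) : Submodule D (FractionRing D)) = tClos D I

/-- A nonzero element `c` of a domain `D` is comparable if for every `x ∈ D`,
either `cD ⊆ xD` or `xD ⊆ cD`. -/
def IsComparable {D : Type*} [CommRing D] (c : D) : Prop :=
  c ≠ 0 ∧ ∀ x : D, Ideal.span {c} ≤ Ideal.span {x} ∨ Ideal.span {x} ≤ Ideal.span {c}

/-- An integral domain is `t`-local if it is local and its maximal ideal is a `t`-ideal. -/
def IsTLocal (A : Type*) [CommRing A] [IsDomain A] : Prop :=
  ∃ h : IsLocalRing A, Ideal.IsT (@IsLocalRing.maximalIdeal A _ h)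

section Aux

set_option linter.unusedSectionVars false

variable {D : Type*} [CommRing D] [IsDomain D]

theorem isComparable_iff {c : D} : IsComparable c ↔ c ≠ 0 ∧ ∀ y : D, y ∣ c ∨ c ∣ y := by
  unfold IsComparable
  simp only [Ideal.span_singleton_le_span_singleton]

/-- Decomposition: if some power of `x` does not divide `a`, then `a = x^m a₁` with `a₁ ∣ x`. -/
theorem decomp_aux {x a : D} (hcomp : ∀ y : D, y ∣ x ∨ x ∣ y)
    (ha : ∃ n : ℕ, ¬ x ^ n ∣ a) : ∃ (m : ℕ) (a₁ u : D), a = x ^ m * a₁ ∧ x = a₁ * u := by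
  classical
  have h0 : Nat.find ha ≠ 0 := by
    intro h
    have := Nat.find_spec ha
    rw [h, pow_zero] at this
    exact this (one_dvd _)
  obtain ⟨m, hm⟩ := Nat.exists_eq_succ_of_ne_zero h0
  have h1 : x ^ m ∣ a := by
    by_contra h
    have := Nat.find_min' ha h
    omega
  obtain ⟨a₁, ha₁⟩ := h1
  have h2 : ¬ x ∣ a₁ := by
    rintro ⟨c, hc⟩
    have : x ^ (m + 1) ∣ a := ⟨c, by rw [ha₁, hc]; ring⟩
    exact (hm ▸ Nat.find_spec ha) this
  rcases hcomp a₁ with h | h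
  · obtain ⟨u, hu⟩ := h
    exact ⟨m, a₁, u, ha₁, hu⟩
  · exact absurd h h2

/-- If some power of `x` does not divide `a`, then `a` divides a power of `x`. -/
theorem dvd_pow_of_not_dvd {x a : D} (hcomp : ∀ y : D, y ∣ x ∨ x ∣ y)
    (ha : ∃ n : ℕ, ¬ x ^ n ∣ a) : ∃ (n : ℕ) (u : D), x ^ n = a * u := by
  obtain ⟨m, a₁, u, ha₁, hu⟩ := decomp_aux hcomp ha
  exact ⟨m + 1, u, by rw [ha₁, pow_succ, hu]; ring⟩

theorem dvd_total_aux {x : D} (hx0 : x ≠ 0) (hcomp : ∀ y : D, y ∣ x ∨ x ∣ y)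
    {m k : ℕ} {a₁ u b₁ v a b : D} (hmk : m ≤ k)
    (ha : a = x ^ m * a₁) (hxa : x = a₁ * u) (hb : b = x ^ k * b₁) (hxb : x = b₁ * v) :
    a ∣ b ∨ b ∣ a := by
  have ha₁0 : a₁ ≠ 0 := fun h => hx0 (by rw [hxa, h, zero_mul])
  have hu0 : u ≠ 0 := fun h => hx0 (by rw [hxa, h, mul_zero])
  have hv0 : v ≠ 0 := fun h => hx0 (by rw [hxb, h, mul_zero])
  rcases lt_or_eq_of_le hmk with hlt | heq
  · left
    refine ⟨u * x ^ (k - m - 1) * b₁, ?_⟩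
    have hk : x ^ k = x ^ m * (x * x ^ (k - m - 1)) := by
      rw [← pow_succ', ← pow_add]
      congr 1
      omega
    calc b = x ^ k * b₁ := hb
      _ = x ^ m * (x * x ^ (k - m - 1)) * b₁ := by rw [hk]
      _ = x ^ m * ((a₁ * u) * x ^ (k - m - 1)) * b₁ := by rw [← hxa]
      _ = a * (u * x ^ (k - m - 1) * b₁) := by rw [ha]; ring
  · subst heq
    rcases hcomp (a₁ * v) with ⟨s, hs⟩ | ⟨t, ht⟩
    · -- x = a₁ * v * s
      left
      have hb₁ : b₁ = a₁ * s := by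
        apply mul_left_cancel₀ hv0
        calc v * b₁ = x := by rw [hxb]; ring
          _ = v * (a₁ * s) := by rw [hs]; ring
      exact ⟨s, by rw [hb, ha, hb₁]; ring⟩
    · -- a₁ * v = x * t
      right
      have hv : v = u * t := by
        apply mul_left_cancel₀ ha₁0
        calc a₁ * v = x * t := ht
          _ = a₁ * (u * t) := by rw [hxa]; ring
      have ha₁ : a₁ = b₁ * t := by
        apply mul_left_cancel₀ hu0
        calc u * a₁ = x := by rw [hxa]; ring
          _ = u * (b₁ * t) := by rw [hxb, hv]; ring
      exact ⟨t, by rw [ha, hb, ha₁]; ring⟩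

/-- Total divisibility on elements not divisible by all powers of a comparable `x`. -/
theorem dvd_total {x : D} (hx0 : x ≠ 0) (hcomp : ∀ y : D, y ∣ x ∨ x ∣ y)
    {a b : D} (ha : ∃ n : ℕ, ¬ x ^ n ∣ a) (hb : ∃ n : ℕ, ¬ x ^ n ∣ b) :
    a ∣ b ∨ b ∣ a := by
  obtain ⟨m, a₁, u, ha₁, hu⟩ := decomp_aux hcomp ha
  obtain ⟨k, b₁, v, hb₁, hv⟩ := decomp_aux hcomp hb
  rcases le_total m k with h | h
  · exact dvd_total_aux hx0 hcomp h ha₁ hu hb₁ hv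
  · exact (dvd_total_aux hx0 hcomp h hb₁ hv ha₁ hu).symm

end Aux

/-- Let `D` be an integral domain.
(1) If `D` contains a nonzero nonunit comparable element, then for every nonzero
nonunit comparable element `x` of `D`, the ideal `Q := ⋂_{n ≥ 0} xⁿD` is a prime ideal
such that `D/Q` is a valuation domain and `Q = QD_Q`.
(2) Conversely, if there is a nonzero `x ∈ D` such that `Q := ⋂_{n ≥ 0} xⁿD` is a
prime ideal, `D/Q` is a valuation domain, and `Q = QD_Q`, then `D` is `t`-local and
`x` is a comparable element of `D`. -/
theorem comparable_iff_powers_intersection {D : Type*} [CommRing D] [IsDomain D] :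
    ((∃ c : D, IsComparable c ∧ ¬ IsUnit c) →
      ∀ x : D, IsComparable x → ¬ IsUnit x →
        ∀ Q : Ideal D, Q = ⨅ n : ℕ, Ideal.span {x ^ n} →
          ∃ hp : Q.IsPrime,
            (letI := hp; ValuationRing (D ⧸ Q)) ∧
            (∀ p ∈ Q, ∀ s ∉ Q, ∃ q ∈ Q, p = s * q)) ∧
    (∀ x : D, x ≠ 0 →
      ∀ Q : Ideal D, Q = ⨅ n : ℕ, Ideal.span {x ^ n} →
        ∀ hp : Q.IsPrime,
          (letI := hp; ValuationRing (D ⧸ Q)) →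
          (∀ p ∈ Q, ∀ s ∉ Q, ∃ q ∈ Q, p = s * q) →
          IsTLocal D ∧ IsComparable x) := by
  constructor
  · -- Part (1)
    rintro - x hx hxu Q hQ
    obtain ⟨hx0, hcomp⟩ := isComparable_iff.mp hx
    have memQ : ∀ a : D, a ∈ Q ↔ ∀ n : ℕ, x ^ n ∣ a := by
      intro a
      rw [hQ]
      simp [Submodule.mem_iInf, Ideal.mem_span_singleton]
    have notQ : ∀ a : D, a ∉ Q ↔ ∃ n : ℕ, ¬ x ^ n ∣ a := by
      intro a
      rw [memQ]
      push_neg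
      rfl
    -- primality
    have hp : Q.IsPrime := by
      constructor
      · intro h
        have : x ^ 1 ∣ 1 := (memQ 1).mp (h ▸ Submodule.mem_top) 1
        rw [pow_one] at this
        exact hxu (isUnit_of_dvd_one this)
      · intro a b hab
        by_contra h
        push_neg at h
        obtain ⟨haQ, hbQ⟩ := h
        obtain ⟨m, u, hmu⟩ := dvd_pow_of_not_dvd hcomp ((notQ a).mp haQ)
        obtain ⟨k, v, hkv⟩ := dvd_pow_of_not_dvd hcomp ((notQ b).mp hbQ)
        obtain ⟨w, hw⟩ := (memQ _).mp hab (m + k + 1)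
        have hxmk : x ^ (m + k) * 1 = x ^ (m + k) * (x * (w * (u * v))) := by
          calc x ^ (m + k) * 1 = (a * u) * (b * v) := by rw [← hmu, ← hkv, pow_add, mul_one]
            _ = (a * b) * (u * v) := by ring
            _ = x ^ (m + k + 1) * w * (u * v) := by rw [hw]
            _ = x ^ (m + k) * (x * (w * (u * v))) := by rw [pow_succ]; ring
        have h1 : (1 : D) = x * (w * (u * v)) :=
          mul_left_cancel₀ (pow_ne_zero _ hx0) hxmk
        exact hxu (IsUnit.of_mul_eq_one _ h1.symm)
    refine ⟨hp, ?_, ?_⟩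
    · -- valuation ring
      letI := hp
      haveI : PreValuationRing (D ⧸ Q) := by
        constructor
        intro a b
        obtain ⟨a, rfl⟩ := Ideal.Quotient.mk_surjective a
        obtain ⟨b, rfl⟩ := Ideal.Quotient.mk_surjective b
        by_cases haQ : a ∈ Q
        · refine ⟨Ideal.Quotient.mk Q 0, Or.inr ?_⟩
          rw [map_zero, mul_zero, eq_comm, Ideal.Quotient.eq_zero_iff_mem]
          exact haQ
        by_cases hbQ : b ∈ Q
        · refine ⟨Ideal.Quotient.mk Q 0, Or.inl ?_⟩
          rw [map_zero, mul_zero, eq_comm, Ideal.Quotient.eq_zero_iff_mem]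
          exact hbQ
        rcases dvd_total hx0 hcomp ((notQ a).mp haQ) ((notQ b).mp hbQ) with ⟨c, hc⟩ | ⟨c, hc⟩
        · exact ⟨Ideal.Quotient.mk Q c, Or.inl (by rw [← map_mul, ← hc])⟩
        · exact ⟨Ideal.Quotient.mk Q c, Or.inr (by rw [← map_mul, ← hc])⟩
      exact ⟨⟩
    · -- Q = Q D_Q
      intro p hp' s hs
      obtain ⟨m, u, hmu⟩ := dvd_pow_of_not_dvd hcomp ((notQ s).mp hs)
      have hs0 : s ≠ 0 := fun h => hs (h ▸ Q.zero_mem)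
      obtain ⟨d, hd⟩ := (memQ p).mp hp' m
      refine ⟨u * d, ?_, by rw [hd, hmu]; ring⟩
      rw [memQ]
      intro n
      obtain ⟨e, he⟩ := (memQ p).mp hp' (n + m)
      refine ⟨u * e, mul_left_cancel₀ hs0 ?_⟩
      calc s * (u * d) = x ^ m * d := by rw [hmu]; ring
        _ = p := hd.symm
        _ = x ^ (n + m) * e := he
        _ = s * (x ^ n * (u * e)) := by rw [pow_add, hmu]; ring
  · -- Part (2)
    intro x hx0 Q hQ hp hval hQDQ
    classical
    letI := hp
    letI : ValuationRing (D ⧸ Q) := hval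
    have hQle : ∀ n : ℕ, Q ≤ Ideal.span {x ^ n} := fun n => hQ ▸ iInf_le _ n
    have hxu : ¬ IsUnit x := by
      intro h
      refine hp.ne_top ?_
      rw [hQ, eq_top_iff]
      refine le_iInf fun n => ?_
      rw [Ideal.span_singleton_eq_top.mpr (h.pow n)]
    have hxQ : x ∉ Q := by
      intro h
      obtain ⟨t, ht⟩ := Ideal.mem_span_singleton.mp (hQle 2 h)
      have h1 : (1 : D) = x * t := by
        apply mul_left_cancel₀ hx0
        rw [mul_one]
        linear_combination ht
      exact hxu (IsUnit.of_mul_eq_one _ h1.symm)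
    -- total divisibility against elements outside Q
    have P2div : ∀ a b : D, a ∉ Q → a ∣ b ∨ b ∣ a := by
      intro a b haQ
      by_cases hbQ : b ∈ Q
      · obtain ⟨q, -, hq⟩ := hQDQ b hbQ a haQ
        exact Or.inl ⟨q, hq⟩
      · obtain ⟨c, hc⟩ := ValuationRing.cond (Ideal.Quotient.mk Q a) (Ideal.Quotient.mk Q b)
        obtain ⟨c, rfl⟩ := Ideal.Quotient.mk_surjective c
        rcases hc with hc | hc
        · left
          rw [← map_mul, Ideal.Quotient.eq] at hc
          obtain ⟨q, -, hq⟩ := hQDQ _ hc a haQ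
          exact ⟨c - q, by linear_combination -hq⟩
        · right
          rw [← map_mul, Ideal.Quotient.eq] at hc
          obtain ⟨q, -, hq⟩ := hQDQ _ hc b hbQ
          exact ⟨c - q, by linear_combination -hq⟩
    have hcompx : IsComparable x := by
      rw [isComparable_iff]
      exact ⟨hx0, fun y => (P2div x y hxQ).symm⟩
    have hQne : Q ≠ ⊤ := hp.ne_top
    -- local ring
    haveI hl : IsLocalRing D := by
      apply IsLocalRing.of_nonunits_add
      intro a b hanu hbnu
      rw [mem_nonunits_iff] at hanu hbnu ⊢
      intro hab
      by_cases haQ : a ∈ Q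
      · by_cases hbQ : b ∈ Q
        · exact hQne (Ideal.eq_top_of_isUnit_mem Q (Q.add_mem haQ hbQ) hab)
        · rcases P2div b a hbQ with ⟨t, ht⟩ | ⟨t, ht⟩
          · refine hbnu (isUnit_of_mul_isUnit_left (y := 1 + t) ?_)
            have : b * (1 + t) = a + b := by rw [ht]; ring
            rwa [this]
          · refine hanu (isUnit_of_mul_isUnit_left (y := t + 1) ?_)
            have : a * (t + 1) = a + b := by rw [ht]; ring
            rwa [this]
      · rcases P2div a b haQ with ⟨t, ht⟩ | ⟨t, ht⟩
        · refine hanu (isUnit_of_mul_isUnit_left (y := 1 + t) ?_)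
          have : a * (1 + t) = a + b := by rw [ht]; ring
          rwa [this]
        · refine hbnu (isUnit_of_mul_isUnit_left (y := t + 1) ?_)
          have : b * (t + 1) = a + b := by rw [ht]; ring
          rwa [this]
    refine ⟨⟨hl, ?_⟩, hcompx⟩
    -- the maximal ideal is a t-ideal
    unfold Ideal.IsT
    set K := FractionRing D with hK
    have inj : Function.Injective (algebraMap D K) := IsFractionRing.injective D K
    set M := IsLocalRing.maximalIdeal D with hM
    have hQM : Q ≤ M := IsLocalRing.le_maximalIdeal hQne
    -- key: F^vv stays below principal ideals above F
    have key : ∀ (F : FractionalIdeal D⁰ K) (g : D), F ≠ 0 → g ≠ 0 →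
        F ≤ ((Ideal.span {g} : Ideal D) : FractionalIdeal D⁰ K) →
        (F⁻¹)⁻¹ ≤ ((Ideal.span {g} : Ideal D) : FractionalIdeal D⁰ K) := by
      intro F g hF0 hg0 hFg
      have hag : algebraMap D K g ≠ 0 := fun h => hg0 (inj (by simpa using h))
      rw [FractionalIdeal.coeIdeal_span_singleton] at hFg ⊢
      have hG0 : FractionalIdeal.spanSingleton D⁰ (algebraMap D K g) ≠ 0 :=
        fun h => hag (FractionalIdeal.spanSingleton_eq_zero_iff.mp h)
      have h1 : (FractionalIdeal.spanSingleton D⁰ (algebraMap D K g))⁻¹ ≤ F⁻¹ :=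
        FractionalIdeal.inv_anti_mono hF0 hG0 hFg
      have hGinv : (FractionalIdeal.spanSingleton D⁰ (algebraMap D K g))⁻¹ =
          FractionalIdeal.spanSingleton D⁰ (algebraMap D K g)⁻¹ :=
        FractionalIdeal.spanSingleton_inv _ _
      have hGinv0 : (FractionalIdeal.spanSingleton D⁰ (algebraMap D K g))⁻¹ ≠ 0 := by
        rw [hGinv]
        exact fun h => (inv_ne_zero hag) (FractionalIdeal.spanSingleton_eq_zero_iff.mp h)
      have hFinv0 : F⁻¹ ≠ 0 :=
        fun h => hGinv0 (le_antisymm (h ▸ h1) (FractionalIdeal.zero_le _))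
      have h2 : (F⁻¹)⁻¹ ≤ ((FractionalIdeal.spanSingleton D⁰ (algebraMap D K g))⁻¹)⁻¹ :=
        FractionalIdeal.inv_anti_mono hGinv0 hFinv0 h1
      rwa [hGinv, FractionalIdeal.spanSingleton_inv, inv_inv] at h2
    apply le_antisymm
    · -- M ≤ tClos
      intro ξ hξ
      obtain ⟨a, haM, rfl⟩ := (FractionalIdeal.mem_coeIdeal _).mp (FractionalIdeal.mem_coe.mp hξ)
      by_cases ha0 : a = 0
      · subst ha0
        rw [map_zero]
        exact Submodule.zero_mem _
      set F := FractionalIdeal.spanSingleton D⁰ (algebraMap D K a) with hF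
      have hF0 : F ≠ 0 := fun h => ha0 (inj (by
        simpa using FractionalIdeal.spanSingleton_eq_zero_iff.mp h))
      have hmem : F ∈ {F : FractionalIdeal D⁰ K |
          F ≠ 0 ∧ F ≤ (M : FractionalIdeal D⁰ K) ∧ (F : Submodule D K).FG} :=
        ⟨hF0,
         FractionalIdeal.spanSingleton_le_iff_mem.mpr (FractionalIdeal.mem_coe.mp hξ),
         by rw [hF, FractionalIdeal.coe_spanSingleton]; exact Submodule.fg_span_singleton _⟩
      have hle : (((F⁻¹)⁻¹ : FractionalIdeal D⁰ K) : Submodule D K) ≤ tClos D (M : FractionalIdeal D⁰ K) :=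
        le_iSup_of_le F (le_iSup_of_le hmem le_rfl)
      apply hle
      rw [FractionalIdeal.mem_coe]
      have hFvv : (F⁻¹)⁻¹ = F := by
        rw [hF, FractionalIdeal.spanSingleton_inv, FractionalIdeal.spanSingleton_inv, inv_inv]
      rw [hFvv]
      exact FractionalIdeal.mem_spanSingleton_self _ _
    · -- tClos ≤ M
      refine iSup_le fun F => iSup_le fun hmem => ?_
      obtain ⟨hF0, hFM, hFG⟩ := hmem
      have hmemF : ∀ ξ ∈ F, ∃ a : D, a ∈ M ∧ algebraMap D K a = ξ := by
        intro ξ hξ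
        obtain ⟨a, haM, ha⟩ := (FractionalIdeal.mem_coeIdeal _).mp (hFM hξ)
        exact ⟨a, haM, ha⟩
      set I : Ideal D := Submodule.comap (Algebra.linearMap D K) (F : Submodule D K) with hI
      have hIF : ∀ a : D, a ∈ I ↔ algebraMap D K a ∈ F := by
        intro a
        rw [hI, Submodule.mem_comap]
        exact FractionalIdeal.mem_coe
      have hFI : (F : Submodule D K) = Submodule.map (Algebra.linearMap D K) I := by
        apply le_antisymm
        · intro ξ hξ
          obtain ⟨a, haM, ha⟩ := hmemF ξ (FractionalIdeal.mem_coe.mp hξ)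
          exact ⟨a, (hIF a).mpr (ha ▸ FractionalIdeal.mem_coe.mp hξ), ha⟩
        · rintro ξ ⟨a, haI, rfl⟩
          exact FractionalIdeal.mem_coe.mpr ((hIF a).mp haI)
      have hIFG : I.FG := by
        apply Submodule.fg_of_fg_map (Algebra.linearMap D K)
          (LinearMap.ker_eq_bot.mpr (by exact inj))
        rw [← hFI]
        exact hFG
      have hIM : I ≤ M := by
        intro a haI
        obtain ⟨a', ha'M, ha'⟩ := hmemF _ ((hIF a).mp haI)
        exact (inj ha') ▸ ha'M
      obtain ⟨s, hs⟩ := hIFG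
      have hFsub : ∀ J : Ideal D, I ≤ J → F ≤ ((J : Ideal D) : FractionalIdeal D⁰ K) := by
        intro J hIJ ξ hξ
        obtain ⟨a, haM, ha⟩ := hmemF ξ hξ
        exact (FractionalIdeal.mem_coeIdeal _).mpr ⟨a, hIJ ((hIF a).mpr (ha ▸ hξ)), ha⟩
      by_cases hsQ : ∀ a ∈ s, a ∈ Q
      · -- F sits inside every x^n D
        have hIQ : I ≤ Q := by
          rw [← hs]
          exact Ideal.span_le.mpr hsQ
        have hvv : ∀ n : ℕ, (F⁻¹)⁻¹ ≤ ((Ideal.span {x ^ n} : Ideal D) : FractionalIdeal D⁰ K) :=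
          fun n => key F (x ^ n) hF0 (pow_ne_zero n hx0)
            (hFsub _ (le_trans hIQ (hQle n)))
        intro ξ hξ
        obtain ⟨a, ha0', ha⟩ := (FractionalIdeal.mem_coeIdeal _).mp
          ((hvv 0) (FractionalIdeal.mem_coe.mp hξ))
        have haQ : a ∈ Q := by
          rw [hQ, Submodule.mem_iInf]
          intro n
          obtain ⟨b, hb, hba⟩ := (FractionalIdeal.mem_coeIdeal _).mp
            ((hvv n) (FractionalIdeal.mem_coe.mp hξ))
          exact (inj (hba.trans ha.symm)) ▸ hb
        exact FractionalIdeal.mem_coe.mpr ((FractionalIdeal.mem_coeIdeal _).mpr ⟨a, hQM haQ, ha⟩)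
      · push_neg at hsQ
        obtain ⟨a₀, ha₀s, ha₀Q⟩ := hsQ
        -- a minimal generator w.r.t. divisibility
        have hmin : ∀ t : Finset D, (∀ a ∈ t, a ∉ Q) → t.Nonempty → ∃ g ∈ t, ∀ a ∈ t, g ∣ a := by
          intro t
          induction t using Finset.induction_on with
          | empty => exact fun _ hne => absurd hne (by simp)
          | @insert b t hbt ih =>
            intro ht hne
            rcases t.eq_empty_or_nonempty with rfl | htne
            · exact ⟨b, Finset.mem_insert_self _ _, by simp⟩
            · obtain ⟨g, hgt, hgdvd⟩ := ih (fun a ha => ht a (Finset.mem_insert_of_mem ha)) htne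
              rcases P2div b g (ht b (Finset.mem_insert_self _ _)) with hbg | hgb
              · refine ⟨b, Finset.mem_insert_self _ _, fun a ha => ?_⟩
                rcases Finset.mem_insert.mp ha with rfl | ha
                · exact dvd_rfl
                · exact hbg.trans (hgdvd a ha)
              · refine ⟨g, Finset.mem_insert_of_mem hgt, fun a ha => ?_⟩
                rcases Finset.mem_insert.mp ha with rfl | ha
                · exact hgb
                · exact hgdvd a ha
        obtain ⟨g, hgs', hgdvd⟩ := hmin (s.filter (fun a => a ∉ Q))
          (fun a ha => (Finset.mem_filter.mp ha).2)
          ⟨a₀, Finset.mem_filter.mpr ⟨ha₀s, ha₀Q⟩⟩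
        have hgQ : g ∉ Q := (Finset.mem_filter.mp hgs').2
        have hgs : g ∈ s := (Finset.mem_filter.mp hgs').1
        have hg0 : g ≠ 0 := fun h => hgQ (h ▸ Q.zero_mem)
        have hgM : g ∈ M := hIM (hs ▸ Ideal.subset_span hgs)
        have hIg : I ≤ Ideal.span {g} := by
          rw [← hs, Ideal.span_le]
          intro a ha
          rw [SetLike.mem_coe, Ideal.mem_span_singleton]
          by_cases haQ : a ∈ Q
          · obtain ⟨q, -, hq⟩ := hQDQ a haQ g hgQ
            exact ⟨q, hq⟩
          · exact hgdvd a (Finset.mem_filter.mpr ⟨ha, haQ⟩)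
        have hkey := key F g hF0 hg0 (hFsub _ hIg)
        intro ξ hξ
        obtain ⟨a, hag, ha⟩ := (FractionalIdeal.mem_coeIdeal _).mp
          (hkey (FractionalIdeal.mem_coe.mp hξ))
        have haM : a ∈ M :=
          ((Ideal.span_singleton_le_iff_mem M).mpr hgM) hag
        exact FractionalIdeal.mem_coe.mpr ((FractionalIdeal.mem_coeIdeal _).mpr ⟨a, haM, ha⟩)
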